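/- Let V be a Banach space, T > 0, z₁ > 1 and l ≥ 1. Let h ∈ 𝒞𝒞_{3,l}(V) satisfy δ₁h = 0 and M := sup_{τ∈[0,T]^l} ‖h(·,τ)‖_{z₁} < ∞, where h(·,τ) ∈ 𝒞₃(V) is the slice of h at fixed second-group arguments τ. Then there exists a unique Λ₁h ∈ 𝒞𝒞_{2,l}(V) such that δ₁(Λ₁h) = h and, for each τ, ‖(Λ₁h)(·,τ)‖_ν < ∞ for some ν > 1; moreover ‖(Λ₁h)(·,τ)‖_{z₁} ≤ (2^{z₁} − 2)^{−1} ‖h(·,τ)‖_{z₁} for every τ ∈ [0,T]^l. -/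

import Mathlib

open Set Finset Filter

set_option linter.unusedSectionVars false
set_option linter.unusedVariables false
set_option maxHeartbeats 1000000

section Arith
variable {z₁ : ℝ}

lemma two_mul_rpow (z₁ : ℝ) : (2:ℝ) * 2 ^ (-z₁) = 2 ^ (1 - z₁) := by
  rw [show (1 - z₁) = 1 + (-z₁) by ring, Real.rpow_add (by norm_num : (0:ℝ) < 2),
    Real.rpow_one]

lemma q_lt_one (hz : 1 < z₁) : (2:ℝ) ^ (1 - z₁) < 1 :=
  Real.rpow_lt_one_of_one_lt_of_neg (by norm_num) (by linarith)

lemma q_pos (z₁ : ℝ) : (0:ℝ) < 2 ^ (1 - z₁) := Real.rpow_pos_of_pos (by norm_num) _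

lemma two_rpow_sub_two_pos (hz : 1 < z₁) : (0:ℝ) < 2 ^ z₁ - 2 := by
  have : (2:ℝ) ^ (1:ℝ) < 2 ^ z₁ :=
    Real.rpow_lt_rpow_of_exponent_lt (by norm_num) hz
  rw [Real.rpow_one] at this; linarith

lemma pow_div_rpow (z₁ : ℝ) (d : ℝ) (hd : 0 ≤ d) (m : ℕ) :
    (d / 2 ^ m) ^ z₁ = d ^ z₁ * ((2:ℝ) ^ (-z₁)) ^ m := by
  have h2 : (0:ℝ) ≤ 2 := by norm_num
  rw [Real.div_rpow hd (by positivity), ← Real.rpow_natCast (2:ℝ) m,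
    ← Real.rpow_mul h2, ← Real.rpow_natCast ((2:ℝ) ^ (-z₁)) m, ← Real.rpow_mul h2,
    div_eq_mul_inv, ← Real.rpow_neg h2]
  ring_nf

lemma geom_row_arith (z₁ : ℝ) (S d : ℝ) (hd : 0 ≤ d) (n : ℕ) :
    (2:ℝ) ^ n * (S * (d / 2 ^ (n + 1)) ^ z₁)
      = S * d ^ z₁ * 2 ^ (-z₁) * ((2:ℝ) ^ (1 - z₁)) ^ n := by
  rw [pow_div_rpow z₁ d hd (n + 1), pow_succ, ← two_mul_rpow z₁, mul_pow]
  ring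

lemma const_arith (hz : 1 < z₁) :
    (2:ℝ) ^ (-z₁) * (1 - (2:ℝ) ^ (1 - z₁))⁻¹ = ((2:ℝ) ^ z₁ - 2)⁻¹ := by
  have h2 : (0:ℝ) < 2 := by norm_num
  have key : (1 - (2:ℝ) ^ (1 - z₁)) * 2 ^ z₁ = 2 ^ z₁ - 2 := by
    rw [sub_mul, one_mul, ← Real.rpow_add h2]
    norm_num
  have hb : (0:ℝ) < 1 - 2 ^ (1 - z₁) := by linarith [q_lt_one hz]
  rw [Real.rpow_neg (le_of_lt h2), ← mul_inv, ← key]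
  ring_nf

end Arith

section Sew
variable {V : Type*} [NormedAddCommGroup V] [NormedSpace ℝ V] [CompleteSpace V]

noncomputable def dyp (t s : ℝ) (n i : ℕ) : ℝ := t + i * (s - t) / 2 ^ n

noncomputable def row (f : ℝ → ℝ → ℝ → V) (t s : ℝ) (n : ℕ) : V :=
  ∑ i ∈ Finset.range (2 ^ n),
    f (dyp t s n i) (dyp t s (n + 1) (2 * i + 1)) (dyp t s n (i + 1))

noncomputable def rr (f : ℝ → ℝ → ℝ → V) (t s : ℝ) : V := ∑' n, row f t s n

noncomputable def II (f : ℝ → ℝ → ℝ → V) (t s : ℝ) : V := -f 0 t s - rr f t s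

lemma dyp_zero (t s : ℝ) (n : ℕ) : dyp t s n 0 = t := by simp [dyp]

lemma dyp_last (t s : ℝ) (n : ℕ) : dyp t s n (2 ^ n) = s := by
  have : ((2:ℝ)^n) ≠ 0 := by positivity
  simp only [dyp]; push_cast; rw [mul_div_cancel_left₀ _ this]; ring

lemma dyp_self (t : ℝ) (n i : ℕ) : dyp t t n i = t := by simp [dyp]

lemma dyp_mem_Icc {T t s : ℝ} (ht : t ∈ Icc 0 T) (hs : s ∈ Icc 0 T) {n i : ℕ}
    (hi : i ≤ 2 ^ n) : dyp t s n i ∈ Icc 0 T := by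
  have h1 : (0:ℝ) ≤ (i : ℝ) / 2 ^ n := by positivity
  have h2 : (i : ℝ) / 2 ^ n ≤ 1 := by
    rw [div_le_one (by positivity)]
    exact_mod_cast (by exact_mod_cast hi : (i:ℝ) ≤ (2:ℝ)^n)
  have := (convex_Icc (0:ℝ) T).add_smul_sub_mem ht hs ⟨h1, h2⟩
  have e : dyp t s n i = t + ((i:ℝ) / 2 ^ n) • (s - t) := by
    simp only [dyp, smul_eq_mul]; ring
  rw [e]; exact this

lemma dyp_double (t s : ℝ) (n i : ℕ) : dyp t s (n + 1) (2 * i) = dyp t s n i := by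
  simp only [dyp, pow_succ]
  push_cast; ring

lemma dyp_gap (t s : ℝ) (n i d : ℕ) :
    dyp t s n (i + d) - dyp t s n i = d * (s - t) / 2 ^ n := by
  simp only [dyp]; push_cast; ring

lemma abs_dyp_gap (t s : ℝ) (n i d : ℕ) :
    |dyp t s n (i + d) - dyp t s n i| = d * |t - s| / 2 ^ n := by
  rw [dyp_gap, abs_div, abs_mul, abs_sub_comm s t]
  simp [abs_of_nonneg]

lemma dyp_left_half (t s : ℝ) (n i : ℕ) :
    dyp t s (n + 1) i = dyp t ((t + s) / 2) n i := by
  simp only [dyp, pow_succ]; ring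

lemma dyp_right_half (t s : ℝ) (n i : ℕ) :
    dyp t s (n + 1) (2 ^ n + i) = dyp ((t + s) / 2) s n i := by
  have : ((2:ℝ)^n) ≠ 0 := by positivity
  simp only [dyp, pow_succ]
  push_cast
  field_simp
  ring

lemma dyp_midpoint (t s : ℝ) (n i j : ℕ) :
    dyp t s (n + 1) (i + j) = (dyp t s n i + dyp t s n j) / 2 := by
  simp only [dyp, pow_succ]; push_cast; ring


variable {T z₁ S : ℝ} {f : ℝ → ℝ → ℝ → V} {t s : ℝ}

lemma row_norm_le (hS : 0 ≤ S)
    (HB : ∀ x y z D : ℝ, x ∈ Icc 0 T → y ∈ Icc 0 T → z ∈ Icc 0 T → 0 ≤ D →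
      |x - y| ≤ D → |y - z| ≤ D → ‖f x y z‖ ≤ S * D ^ z₁)
    (ht : t ∈ Icc 0 T) (hs : s ∈ Icc 0 T) (n : ℕ) :
    ‖row f t s n‖ ≤ S * |t - s| ^ z₁ * 2 ^ (-z₁) * ((2:ℝ) ^ (1 - z₁)) ^ n := by
  have hts : (0:ℝ) ≤ |t - s| := abs_nonneg _
  have hterm : ∀ i ∈ Finset.range (2 ^ n),
      ‖f (dyp t s n i) (dyp t s (n + 1) (2 * i + 1)) (dyp t s n (i + 1))‖
        ≤ S * (|t - s| / 2 ^ (n + 1)) ^ z₁ := by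
    intro i hi
    simp only [Finset.mem_range] at hi
    have hi2 : 2 * i + 1 ≤ 2 ^ (n + 1) := by rw [pow_succ]; omega
    have hi3 : 2 * i + 2 ≤ 2 ^ (n + 1) := by rw [pow_succ]; omega
    have m1 := dyp_mem_Icc ht hs (le_of_lt hi)
    have m2 := dyp_mem_Icc ht hs hi2
    have m3 := dyp_mem_Icc ht hs (Nat.succ_le_of_lt hi)
    have g1 : |dyp t s n i - dyp t s (n + 1) (2 * i + 1)| = |t - s| / 2 ^ (n + 1) := by
      rw [← dyp_double t s n i, abs_sub_comm]
      simpa using abs_dyp_gap t s (n + 1) (2 * i) 1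
    have g2 : |dyp t s (n + 1) (2 * i + 1) - dyp t s n (i + 1)| = |t - s| / 2 ^ (n + 1) := by
      have e : dyp t s n (i + 1) = dyp t s (n + 1) (2 * i + 1 + 1) := by
        rw [show 2 * i + 1 + 1 = 2 * (i + 1) by ring, dyp_double]
      rw [e, abs_sub_comm]
      simpa using abs_dyp_gap t s (n + 1) (2 * i + 1) 1
    exact HB _ _ _ _ m1 m2 m3 (by positivity) (le_of_eq g1) (le_of_eq g2)
  calc ‖row f t s n‖ ≤ ∑ _i ∈ Finset.range (2 ^ n), S * (|t - s| / 2 ^ (n + 1)) ^ z₁ :=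
        (norm_sum_le _ _).trans (Finset.sum_le_sum hterm)
    _ = (2:ℝ) ^ n * (S * (|t - s| / 2 ^ (n + 1)) ^ z₁) := by
        rw [Finset.sum_const, Finset.card_range, nsmul_eq_mul]; push_cast; ring
    _ = S * |t - s| ^ z₁ * 2 ^ (-z₁) * ((2:ℝ) ^ (1 - z₁)) ^ n :=
        geom_row_arith z₁ S _ hts n

lemma row_summable (hz : 1 < z₁) (hS : 0 ≤ S)
    (HB : ∀ x y z D : ℝ, x ∈ Icc 0 T → y ∈ Icc 0 T → z ∈ Icc 0 T → 0 ≤ D →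
      |x - y| ≤ D → |y - z| ≤ D → ‖f x y z‖ ≤ S * D ^ z₁)
    (ht : t ∈ Icc 0 T) (hs : s ∈ Icc 0 T) : Summable (row f t s) := by
  refine Summable.of_norm_bounded
    (Summable.mul_left (S * |t - s| ^ z₁ * 2 ^ (-z₁))
      (summable_geometric_of_lt_one (q_pos z₁).le (q_lt_one hz)))
    (fun n => ?_)
  simpa [mul_assoc] using row_norm_le hS HB ht hs n

lemma rr_norm_le (hz : 1 < z₁) (hS : 0 ≤ S)
    (HB : ∀ x y z D : ℝ, x ∈ Icc 0 T → y ∈ Icc 0 T → z ∈ Icc 0 T → 0 ≤ D →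
      |x - y| ≤ D → |y - z| ≤ D → ‖f x y z‖ ≤ S * D ^ z₁)
    (ht : t ∈ Icc 0 T) (hs : s ∈ Icc 0 T) :
    ‖rr f t s‖ ≤ ((2:ℝ) ^ z₁ - 2)⁻¹ * S * |t - s| ^ z₁ := by
  have hsum := row_summable hz hS HB ht hs
  have hgeom : Summable (fun n : ℕ => S * |t - s| ^ z₁ * 2 ^ (-z₁) * ((2:ℝ) ^ (1 - z₁)) ^ n) := by
    simpa [mul_assoc] using Summable.mul_left (S * |t - s| ^ z₁ * 2 ^ (-z₁))
      (summable_geometric_of_lt_one (q_pos z₁).le (q_lt_one hz))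
  calc ‖rr f t s‖ ≤ ∑' n, S * |t - s| ^ z₁ * 2 ^ (-z₁) * ((2:ℝ) ^ (1 - z₁)) ^ n :=
        tsum_of_norm_bounded hgeom.hasSum (fun n => row_norm_le hS HB ht hs n)
    _ = S * |t - s| ^ z₁ * 2 ^ (-z₁) * (1 - (2:ℝ) ^ (1 - z₁))⁻¹ := by
        rw [show (fun n : ℕ => S * |t - s| ^ z₁ * 2 ^ (-z₁) * ((2:ℝ) ^ (1 - z₁)) ^ n)
            = (fun n : ℕ => (S * |t - s| ^ z₁ * 2 ^ (-z₁)) * ((2:ℝ) ^ (1 - z₁)) ^ n) by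
            funext n; ring, tsum_mul_left,
          tsum_geometric_of_lt_one (q_pos z₁).le (q_lt_one hz)]
    _ = ((2:ℝ) ^ z₁ - 2)⁻¹ * S * |t - s| ^ z₁ := by
        rw [mul_assoc, const_arith hz]; ring

lemma row_zero_eq (f : ℝ → ℝ → ℝ → V) (t s : ℝ) :
    row f t s 0 = f t ((t + s) / 2) s := by
  have e1 : dyp t s 0 0 = t := by simp [dyp]
  have e2 : dyp t s 1 1 = (t + s) / 2 := by simp [dyp]; ring
  have e3 : dyp t s 0 1 = s := by simp [dyp]
  simp only [row, pow_zero, Finset.sum_range_one]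
  rw [e1, e2, e3]

lemma row_succ_split (f : ℝ → ℝ → ℝ → V) (t s : ℝ) (n : ℕ) :
    row f t s (n + 1) = row f t ((t + s) / 2) n + row f ((t + s) / 2) s n := by
  have h2 : 2 ^ (n + 1) = 2 ^ n + 2 ^ n := by rw [pow_succ]; omega
  unfold row
  rw [h2, Finset.sum_range_add]
  congr 1
  · refine Finset.sum_congr rfl fun i hi => ?_
    rw [dyp_left_half t s n i, dyp_left_half t s (n + 1) (2 * i + 1),
      dyp_left_half t s n (i + 1)]
  · refine Finset.sum_congr rfl fun i hi => ?_
    have em : 2 * (2 ^ n + i) + 1 = 2 ^ (n + 1) + (2 * i + 1) := by rw [pow_succ]; ring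
    have e3 : 2 ^ n + i + 1 = 2 ^ n + (i + 1) := by ring
    rw [dyp_right_half t s n i, em, dyp_right_half t s (n + 1) (2 * i + 1), e3,
      dyp_right_half t s n (i + 1)]

lemma rr_self (h0 : f t t t = 0) : rr f t t = 0 := by
  have hrow : ∀ n, row f t t n = 0 := fun n =>
    Finset.sum_eq_zero fun i _ => by rw [dyp_self, dyp_self, dyp_self]; exact h0
  simp [rr, hrow]

lemma rr_midpoint (hz : 1 < z₁) (hS : 0 ≤ S)
    (HB : ∀ x y z D : ℝ, x ∈ Icc 0 T → y ∈ Icc 0 T → z ∈ Icc 0 T → 0 ≤ D →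
      |x - y| ≤ D → |y - z| ≤ D → ‖f x y z‖ ≤ S * D ^ z₁)
    (ht : t ∈ Icc 0 T) (hs : s ∈ Icc 0 T) :
    rr f t s = f t ((t + s) / 2) s + rr f t ((t + s) / 2) + rr f ((t + s) / 2) s := by
  have e2 : dyp t s 1 1 = (t + s) / 2 := by simp [dyp]; ring
  have hm : (t + s) / 2 ∈ Icc 0 T := by
    rw [← e2]; exact dyp_mem_Icc ht hs (by norm_num)
  have s0 := row_summable hz hS HB ht hs
  have s1 := row_summable hz hS HB ht hm
  have s2 := row_summable hz hS HB hm hs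
  have h1 : rr f t s = row f t s 0 + ∑' n, row f t s (n + 1) := s0.tsum_eq_zero_add
  have h2 : (fun n => row f t s (n + 1))
      = fun n => row f t ((t + s) / 2) n + row f ((t + s) / 2) s n :=
    funext fun n => row_succ_split f t s n
  rw [h1, row_zero_eq, h2, Summable.tsum_add s1 s2, ← add_assoc]
  rfl

lemma cocycle_g
    (HC : ∀ a b c d : ℝ, a ∈ Icc 0 T → b ∈ Icc 0 T → c ∈ Icc 0 T → d ∈ Icc 0 T →
      f b c d - f a c d + f a b d - f a b c = 0)
    (h0T : (0:ℝ) ∈ Icc 0 T) {u : ℝ}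
    (ht : t ∈ Icc 0 T) (hu : u ∈ Icc 0 T) (hs : s ∈ Icc 0 T) :
    f t u s = -f 0 t s - (-f 0 t u) - (-f 0 u s) := by
  have hc := HC 0 t u s h0T ht hu hs
  have e : f t u s - (-f 0 t s - (-f 0 t u) - (-f 0 u s))
      = f t u s - f 0 u s + f 0 t s - f 0 t u := by abel
  exact eq_of_sub_eq_zero (by rw [e]; exact hc)

lemma II_midpoint (hz : 1 < z₁) (hS : 0 ≤ S)
    (HB : ∀ x y z D : ℝ, x ∈ Icc 0 T → y ∈ Icc 0 T → z ∈ Icc 0 T → 0 ≤ D →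
      |x - y| ≤ D → |y - z| ≤ D → ‖f x y z‖ ≤ S * D ^ z₁)
    (HC : ∀ a b c d : ℝ, a ∈ Icc 0 T → b ∈ Icc 0 T → c ∈ Icc 0 T → d ∈ Icc 0 T →
      f b c d - f a c d + f a b d - f a b c = 0)
    (h0T : (0:ℝ) ∈ Icc 0 T)
    (ht : t ∈ Icc 0 T) (hs : s ∈ Icc 0 T) :
    II f t s = II f t ((t + s) / 2) + II f ((t + s) / 2) s := by
  have e2 : dyp t s 1 1 = (t + s) / 2 := by simp [dyp]; ring
  have hm : (t + s) / 2 ∈ Icc 0 T := by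
    rw [← e2]; exact dyp_mem_Icc ht hs (by norm_num)
  have hg := cocycle_g HC h0T ht hm hs
  unfold II
  rw [rr_midpoint hz hS HB ht hs, hg]
  abel

lemma II_self
    (H0 : ∀ x y z : ℝ, x ∈ Icc 0 T → y ∈ Icc 0 T → z ∈ Icc 0 T →
      (x = y ∨ y = z) → f x y z = 0)
    (h0T : (0:ℝ) ∈ Icc 0 T) (ht : t ∈ Icc 0 T) : II f t t = 0 := by
  unfold II
  rw [rr_self (H0 t t t ht ht ht (Or.inl rfl)), H0 0 t t h0T ht ht (Or.inr rfl)]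
  simp

lemma sum_range_two_mul (a : ℕ → V) (d : ℕ) :
    ∑ k ∈ Finset.range (2 * d), a k = ∑ k ∈ Finset.range d, (a (2 * k) + a (2 * k + 1)) := by
  induction d with
  | zero => simp
  | succ d ih =>
      rw [show 2 * (d + 1) = 2 * d + 1 + 1 by ring, Finset.sum_range_succ,
        Finset.sum_range_succ, ih, Finset.sum_range_succ]
      abel

section Hyps
variable (hT : 0 < T) (hz : 1 < z₁) (hS : 0 ≤ S)
  (HB : ∀ x y z D : ℝ, x ∈ Icc 0 T → y ∈ Icc 0 T → z ∈ Icc 0 T → 0 ≤ D →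
      |x - y| ≤ D → |y - z| ≤ D → ‖f x y z‖ ≤ S * D ^ z₁)
  (HC : ∀ a b c d : ℝ, a ∈ Icc 0 T → b ∈ Icc 0 T → c ∈ Icc 0 T → d ∈ Icc 0 T →
      f b c d - f a c d + f a b d - f a b c = 0)
  (H0 : ∀ x y z : ℝ, x ∈ Icc 0 T → y ∈ Icc 0 T → z ∈ Icc 0 T →
      (x = y ∨ y = z) → f x y z = 0)
  (ht : t ∈ Icc 0 T) (hs : s ∈ Icc 0 T)

include hT hz hS HB HC H0 ht hs

lemma g_telescope (m : ℕ) :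
    ∀ d i : ℕ, i + d ≤ 2 ^ m →
    (-f 0 (dyp t s m i) (dyp t s m (i + d)))
        - ∑ k ∈ Finset.range d, (-f 0 (dyp t s m (i + k)) (dyp t s m (i + k + 1)))
      = ∑ k ∈ Finset.range d, f (dyp t s m i) (dyp t s m (i + k)) (dyp t s m (i + k + 1)) := by
  have h0T : (0:ℝ) ∈ Icc 0 T := ⟨le_refl 0, hT.le⟩
  intro d
  induction d with
  | zero =>
      intro i hv
      simp only [Nat.add_zero, Finset.range_zero, Finset.sum_empty, sub_zero]
      rw [H0 0 (dyp t s m i) (dyp t s m i) h0T (dyp_mem_Icc ht hs hv)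
        (dyp_mem_Icc ht hs hv) (Or.inr rfl)]
      simp
  | succ d ih =>
      intro i hv
      have hv' : i + d ≤ 2 ^ m := by omega
      have e1 : i + (d + 1) = i + d + 1 := by ring
      have m1 : dyp t s m i ∈ Icc 0 T := dyp_mem_Icc ht hs (by omega)
      have m2 : dyp t s m (i + d) ∈ Icc 0 T := dyp_mem_Icc ht hs (by omega)
      have m3 : dyp t s m (i + d + 1) ∈ Icc 0 T := dyp_mem_Icc ht hs (by omega)
      have hg := cocycle_g HC h0T m1 m2 m3
      rw [e1, Finset.sum_range_succ, Finset.sum_range_succ, ← ih i hv', hg]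
      abel

lemma E_bound (m i d : ℕ) (hv : i + d ≤ 2 ^ m) :
    ‖II f (dyp t s m i) (dyp t s m (i + d))
        - ∑ k ∈ Finset.range d, II f (dyp t s m (i + k)) (dyp t s m (i + k + 1))‖
      ≤ (d * S + (1 + d) * (((2:ℝ) ^ z₁ - 2)⁻¹ * S)) * (d * |t - s|) ^ z₁
          * ((2:ℝ) ^ (-z₁)) ^ m := by
  have h0T : (0:ℝ) ∈ Icc 0 T := ⟨le_refl 0, hT.le⟩
  set K : ℝ := ((2:ℝ) ^ z₁ - 2)⁻¹ * S with hK
  have hKpos : 0 ≤ K := by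
    apply mul_nonneg (inv_nonneg.2 (two_rpow_sub_two_pos hz).le) hS
  rcases Nat.eq_zero_or_pos d with hd0 | hdpos
  · subst hd0
    simp only [Nat.add_zero, Finset.range_zero, Finset.sum_empty, sub_zero] at hv ⊢
    rw [II_self H0 h0T (dyp_mem_Icc ht hs hv)]
    simp only [norm_zero, Nat.cast_zero, zero_mul]
    rw [Real.zero_rpow (by linarith : z₁ ≠ 0)]
    simp
  -- main case
  set D : ℝ := d * |t - s| / 2 ^ m with hD
  have hDnn : 0 ≤ D := by positivity
  have gap1 : ∀ k : ℕ, k ≤ d → |dyp t s m (i + k) - dyp t s m i| ≤ D := by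
    intro k hk
    rw [abs_dyp_gap]
    apply div_le_div_of_nonneg_right ?_ (by positivity)
    · exact mul_le_mul_of_nonneg_right (by exact_mod_cast hk) (abs_nonneg _)
  have gapc : ∀ k : ℕ, |dyp t s m (i + k + 1) - dyp t s m (i + k)| ≤ D := by
    intro k
    rw [abs_dyp_gap t s m (i + k) 1]
    rw [hD]
    apply div_le_div_of_nonneg_right ?_ (by positivity)
    · apply mul_le_mul_of_nonneg_right ?_ (abs_nonneg _)
      · exact_mod_cast Nat.one_le_cast.mpr hdpos
  have hmem2 : ∀ j : ℕ, j ≤ 2 ^ m → dyp t s m j ∈ Icc 0 T := fun j hj =>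
    dyp_mem_Icc ht hs hj
  have hmemi : dyp t s m i ∈ Icc 0 T := dyp_mem_Icc ht hs (by omega)
  have split : II f (dyp t s m i) (dyp t s m (i + d))
        - ∑ k ∈ Finset.range d, II f (dyp t s m (i + k)) (dyp t s m (i + k + 1))
      = (∑ k ∈ Finset.range d, f (dyp t s m i) (dyp t s m (i + k)) (dyp t s m (i + k + 1)))
          - rr f (dyp t s m i) (dyp t s m (i + d))
          + ∑ k ∈ Finset.range d, rr f (dyp t s m (i + k)) (dyp t s m (i + k + 1)) := by
    rw [← g_telescope hT hz hS HB HC H0 ht hs m d i hv]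
    unfold II
    rw [Finset.sum_sub_distrib]
    abel
  rw [split]
  have bA : ‖∑ k ∈ Finset.range d, f (dyp t s m i) (dyp t s m (i + k)) (dyp t s m (i + k + 1))‖
      ≤ d * (S * D ^ z₁) := by
    calc ‖∑ k ∈ Finset.range d, f (dyp t s m i) (dyp t s m (i + k)) (dyp t s m (i + k + 1))‖
        ≤ ∑ k ∈ Finset.range d, S * D ^ z₁ := by
          refine (norm_sum_le _ _).trans (Finset.sum_le_sum fun k hk => ?_)
          simp only [Finset.mem_range] at hk
          refine HB _ _ _ D hmemi (hmem2 (i + k) (by omega)) (hmem2 (i + k + 1) (by omega)) hDnn ?_ ?_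
          · rw [abs_sub_comm]; exact gap1 k hk.le
          · rw [abs_sub_comm]
            exact gapc k
      _ = d * (S * D ^ z₁) := by rw [Finset.sum_const, Finset.card_range, nsmul_eq_mul]
  have bB : ‖rr f (dyp t s m i) (dyp t s m (i + d))‖ ≤ K * D ^ z₁ := by
    have := rr_norm_le hz hS HB hmemi (hmem2 (i + d) (by omega))
    rw [abs_sub_comm, abs_dyp_gap] at this
    rw [hK, hD]
    exact this
  have bC : ‖∑ k ∈ Finset.range d, rr f (dyp t s m (i + k)) (dyp t s m (i + k + 1))‖
      ≤ d * (K * D ^ z₁) := by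
    calc ‖∑ k ∈ Finset.range d, rr f (dyp t s m (i + k)) (dyp t s m (i + k + 1))‖
        ≤ ∑ k ∈ Finset.range d, K * D ^ z₁ := by
          refine (norm_sum_le _ _).trans (Finset.sum_le_sum fun k hk => ?_)
          simp only [Finset.mem_range] at hk
          have h1 := rr_norm_le hz hS HB (hmem2 (i + k) (by omega)) (hmem2 (i + k + 1) (by omega))
          rw [abs_sub_comm, abs_dyp_gap t s m (i + k) 1] at h1
          refine h1.trans ?_
          rw [hK]
          apply mul_le_mul_of_nonneg_left ?_ hKpos
          apply Real.rpow_le_rpow (by positivity) ?_ (by linarith)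
          rw [hD]
          apply div_le_div_of_nonneg_right ?_ (by positivity)
          apply mul_le_mul_of_nonneg_right ?_ (abs_nonneg _)
          exact_mod_cast Nat.one_le_cast.mpr hdpos
      _ = d * (K * D ^ z₁) := by rw [Finset.sum_const, Finset.card_range, nsmul_eq_mul]
  have hDz : D ^ z₁ = (d * |t - s|) ^ z₁ * ((2:ℝ) ^ (-z₁)) ^ m := by
    rw [hD]
    exact pow_div_rpow z₁ (d * |t - s|) (by positivity) m
  calc ‖_ - _ + _‖ ≤ ‖_ - _‖ + ‖_‖ := norm_add_le _ _
    _ ≤ ‖_‖ + ‖_‖ + ‖_‖ := by gcongr; exact norm_sub_le _ _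
    _ ≤ d * (S * D ^ z₁) + K * D ^ z₁ + d * (K * D ^ z₁) := by gcongr
    _ = (d * S + (1 + d) * K) * D ^ z₁ := by ring
    _ = (d * S + (1 + d) * K) * (d * |t - s|) ^ z₁ * ((2:ℝ) ^ (-z₁)) ^ m := by
        rw [hDz]; ring

lemma E_rec (m i d : ℕ) (hv : i + d ≤ 2 ^ m) :
    II f (dyp t s m i) (dyp t s m (i + d))
        - ∑ k ∈ Finset.range d, II f (dyp t s m (i + k)) (dyp t s m (i + k + 1))
      = (II f (dyp t s (m + 1) (2 * i)) (dyp t s (m + 1) (2 * i + d))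
          - ∑ k ∈ Finset.range d,
              II f (dyp t s (m + 1) (2 * i + k)) (dyp t s (m + 1) (2 * i + k + 1)))
        + (II f (dyp t s (m + 1) (2 * i + d)) (dyp t s (m + 1) (2 * i + d + d))
          - ∑ k ∈ Finset.range d,
              II f (dyp t s (m + 1) (2 * i + d + k)) (dyp t s (m + 1) (2 * i + d + k + 1))) := by
  have h0T : (0:ℝ) ∈ Icc 0 T := ⟨le_refl 0, hT.le⟩
  have hmem2 : ∀ j : ℕ, j ≤ 2 ^ m → dyp t s m j ∈ Icc 0 T := fun j hj =>
    dyp_mem_Icc ht hs hj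
  have hsplit : ∀ c e : ℕ, c + e ≤ d →
      II f (dyp t s m (i + c)) (dyp t s m (i + c + e))
        = II f (dyp t s (m + 1) (2 * i + 2 * c)) (dyp t s (m + 1) (2 * i + 2 * c + e))
          + II f (dyp t s (m + 1) (2 * i + 2 * c + e)) (dyp t s (m + 1) (2 * i + 2 * c + e + e)) := by
    intro c e hce
    have h1 := II_midpoint hz hS HB HC h0T (hmem2 (i + c) (by omega)) (hmem2 (i + c + e) (by omega))
    have e1 : dyp t s m (i + c) = dyp t s (m + 1) (2 * i + 2 * c) := by
      rw [← dyp_double t s m (i + c)]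
      rw [show 2 * (i + c) = 2 * i + 2 * c by ring]
    have e2 : dyp t s m (i + c + e) = dyp t s (m + 1) (2 * i + 2 * c + e + e) := by
      rw [← dyp_double t s m (i + c + e)]
      rw [show 2 * (i + c + e) = 2 * i + 2 * c + e + e by ring]
    have e3 : (dyp t s m (i + c) + dyp t s m (i + c + e)) / 2
        = dyp t s (m + 1) (2 * i + 2 * c + e) := by
      rw [← dyp_midpoint t s m (i + c) (i + c + e)]
      rw [show i + c + (i + c + e) = 2 * i + 2 * c + e by ring]
    rw [h1, e3, e1, e2]
  have hpar : II f (dyp t s m i) (dyp t s m (i + d))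
      = II f (dyp t s (m + 1) (2 * i)) (dyp t s (m + 1) (2 * i + d))
        + II f (dyp t s (m + 1) (2 * i + d)) (dyp t s (m + 1) (2 * i + d + d)) := by
    have := hsplit 0 d (by omega)
    simpa only [Nat.add_zero, Nat.mul_zero] using this
  have hsum1 : ∑ k ∈ Finset.range d, II f (dyp t s m (i + k)) (dyp t s m (i + k + 1))
      = ∑ j ∈ Finset.range (2 * d),
          II f (dyp t s (m + 1) (2 * i + j)) (dyp t s (m + 1) (2 * i + j + 1)) := by
    rw [sum_range_two_mul
      (fun j => II f (dyp t s (m + 1) (2 * i + j)) (dyp t s (m + 1) (2 * i + j + 1))) d]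
    refine Finset.sum_congr rfl fun k hk => ?_
    simp only [Finset.mem_range] at hk
    rw [← Nat.add_assoc (2 * i) (2 * k) 1]
    exact hsplit k 1 (by omega)
  have hsum2 : ∑ j ∈ Finset.range (2 * d),
        II f (dyp t s (m + 1) (2 * i + j)) (dyp t s (m + 1) (2 * i + j + 1))
      = (∑ k ∈ Finset.range d,
          II f (dyp t s (m + 1) (2 * i + k)) (dyp t s (m + 1) (2 * i + k + 1)))
        + ∑ k ∈ Finset.range d,
            II f (dyp t s (m + 1) (2 * i + d + k)) (dyp t s (m + 1) (2 * i + d + k + 1)) := by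
    rw [show 2 * d = d + d by ring, Finset.sum_range_add]
    congr 1
    refine Finset.sum_congr rfl fun k hk => ?_
    rw [← Nat.add_assoc (2 * i) d k]
  rw [hpar, hsum1, hsum2]
  abel

lemma stepA (m i d : ℕ) (hv : i + d ≤ 2 ^ m) :
    II f (dyp t s m i) (dyp t s m (i + d))
      = ∑ k ∈ Finset.range d, II f (dyp t s m (i + k)) (dyp t s m (i + k + 1)) := by
  set Cd : ℝ := (d * S + (1 + d) * (((2:ℝ) ^ z₁ - 2)⁻¹ * S)) * (d * |t - s|) ^ z₁ with hCd
  have key : ∀ n : ℕ, ∀ m i : ℕ, i + d ≤ 2 ^ m →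
      ‖II f (dyp t s m i) (dyp t s m (i + d))
        - ∑ k ∈ Finset.range d, II f (dyp t s m (i + k)) (dyp t s m (i + k + 1))‖
      ≤ Cd * ((2:ℝ) ^ (1 - z₁)) ^ n * ((2:ℝ) ^ (-z₁)) ^ m := by
    intro n
    induction n with
    | zero =>
        intro m i hv
        simpa using E_bound hT hz hS HB HC H0 ht hs m i d hv
    | succ n ih =>
        intro m i hv
        have h2m : 2 ^ (m + 1) = 2 ^ m * 2 := by rw [pow_succ]
        have hv1 : 2 * i + d ≤ 2 ^ (m + 1) := by omega
        have hv2 : (2 * i + d) + d ≤ 2 ^ (m + 1) := by omega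
        rw [E_rec hT hz hS HB HC H0 ht hs m i d hv]
        have b1 := ih (m + 1) (2 * i) hv1
        have b2 := ih (m + 1) (2 * i + d) (by omega)
        calc ‖_ + _‖ ≤ _ + _ := norm_add_le _ _
          _ ≤ Cd * ((2:ℝ) ^ (1 - z₁)) ^ n * ((2:ℝ) ^ (-z₁)) ^ (m + 1)
              + Cd * ((2:ℝ) ^ (1 - z₁)) ^ n * ((2:ℝ) ^ (-z₁)) ^ (m + 1) := by
              refine add_le_add ?_ ?_
              · exact b1
              · refine le_trans ?_ b2
                apply le_of_eq
                congr 3 <;> · congr 1; ring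
          _ = Cd * ((2:ℝ) ^ (1 - z₁)) ^ (n + 1) * ((2:ℝ) ^ (-z₁)) ^ m := by
              rw [← two_mul_rpow z₁]
              ring
  have hlim : Filter.Tendsto
      (fun n : ℕ => Cd * ((2:ℝ) ^ (1 - z₁)) ^ n * ((2:ℝ) ^ (-z₁)) ^ m)
      Filter.atTop (nhds 0) := by
    have h1 : Filter.Tendsto (fun n : ℕ => ((2:ℝ) ^ (1 - z₁)) ^ n)
        Filter.atTop (nhds 0) :=
      tendsto_pow_atTop_nhds_zero_of_lt_one (q_pos z₁).le (q_lt_one hz)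
    have := (h1.const_mul Cd).mul_const (((2:ℝ) ^ (-z₁)) ^ m)
    simpa using this
  have hnorm : ‖II f (dyp t s m i) (dyp t s m (i + d))
      - ∑ k ∈ Finset.range d, II f (dyp t s m (i + k)) (dyp t s m (i + k + 1))‖ ≤ 0 :=
    ge_of_tendsto hlim (Filter.Eventually.of_forall fun n => key n m i hv)
  have := norm_le_zero_iff.1 hnorm
  exact sub_eq_zero.1 this

lemma II_antisym {x y : ℝ} (hx : x ∈ Icc 0 T) (hy : y ∈ Icc 0 T) :
    II f x y + II f y x = 0 := by
  have h0T : (0:ℝ) ∈ Icc 0 T := ⟨le_refl 0, hT.le⟩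
  set K : ℝ := ((2:ℝ) ^ z₁ - 2)⁻¹ * S with hK
  have hKnn : 0 ≤ K := mul_nonneg (inv_nonneg.2 (two_rpow_sub_two_pos hz).le) hS
  set CF : ℝ := S + 2 * K with hCF
  have hCFnn : 0 ≤ CF := by positivity
  have hbase : ∀ a b : ℝ, a ∈ Icc 0 T → b ∈ Icc 0 T →
      ‖II f a b + II f b a‖ ≤ CF * |a - b| ^ z₁ := by
    intro a b ha hb
    have hfab : f 0 a b + f 0 b a = f a b a := by
      have hg := cocycle_g HC h0T ha hb ha
      rw [H0 0 a a h0T ha ha (Or.inr rfl)] at hg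
      have : f a b a = f 0 a b + f 0 b a := by rw [hg]; abel
      exact this.symm
    have hII : II f a b + II f b a = -(f a b a) - rr f a b - rr f b a := by
      unfold II
      rw [← hfab]
      abel
    rw [hII]
    have b1 : ‖f a b a‖ ≤ S * |a - b| ^ z₁ :=
      HB a b a (|a - b|) ha hb ha (abs_nonneg _) le_rfl (by rw [abs_sub_comm])
    have b2 : ‖rr f a b‖ ≤ K * |a - b| ^ z₁ := by
      rw [hK]; rw [mul_assoc] at *; exact (rr_norm_le hz hS HB ha hb).trans (le_of_eq (by ring))
    have b3 : ‖rr f b a‖ ≤ K * |a - b| ^ z₁ := by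
      have := rr_norm_le hz hS HB hb ha
      rw [abs_sub_comm] at this
      rw [hK]
      exact this.trans (le_of_eq (by ring))
    calc ‖-(f a b a) - rr f a b - rr f b a‖
        ≤ ‖-(f a b a) - rr f a b‖ + ‖rr f b a‖ := norm_sub_le _ _
      _ ≤ ‖-(f a b a)‖ + ‖rr f a b‖ + ‖rr f b a‖ := by gcongr; exact norm_sub_le _ _
      _ ≤ S * |a - b| ^ z₁ + K * |a - b| ^ z₁ + K * |a - b| ^ z₁ := by
          rw [norm_neg]; gcongr
      _ = CF * |a - b| ^ z₁ := by rw [hCF]; ring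
  have key : ∀ n : ℕ, ∀ a b : ℝ, a ∈ Icc 0 T → b ∈ Icc 0 T →
      ‖II f a b + II f b a‖ ≤ CF * ((2:ℝ) ^ (1 - z₁)) ^ n * |a - b| ^ z₁ := by
    intro n
    induction n with
    | zero => intro a b ha hb; simpa using hbase a b ha hb
    | succ n ih =>
        intro a b ha hb
        have e2 : dyp a b 1 1 = (a + b) / 2 := by simp [dyp]; ring
        have hm : (a + b) / 2 ∈ Icc 0 T := by
          rw [← e2]; exact dyp_mem_Icc ha hb (by norm_num)
        have h1 := II_midpoint hz hS HB HC h0T ha hb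
        have h2 := II_midpoint hz hS HB HC h0T hb ha
        have hcomm : (b + a) / 2 = (a + b) / 2 := by ring
        rw [hcomm] at h2
        have hsplit : II f a b + II f b a
            = (II f a ((a + b) / 2) + II f ((a + b) / 2) a)
              + (II f ((a + b) / 2) b + II f b ((a + b) / 2)) := by
          rw [h1, h2]; abel
        rw [hsplit]
        have ia := ih a ((a + b) / 2) ha hm
        have ib := ih ((a + b) / 2) b hm hb
        have gm1 : |a - (a + b) / 2| = |a - b| / 2 := by
          rw [show a - (a + b) / 2 = (a - b) / 2 by ring, abs_div]
          norm_num
        have gm2 : |(a + b) / 2 - b| = |a - b| / 2 := by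
          rw [show (a + b) / 2 - b = (a - b) / 2 by ring, abs_div]
          norm_num
        rw [gm1] at ia; rw [gm2] at ib
        have hhalf : (|a - b| / 2) ^ z₁ = |a - b| ^ z₁ * 2 ^ (-z₁) := by
          have := pow_div_rpow z₁ (|a - b|) (abs_nonneg _) 1
          simpa using this
        calc ‖_ + _‖ ≤ ‖_‖ + ‖_‖ := norm_add_le _ _
          _ ≤ CF * ((2:ℝ) ^ (1 - z₁)) ^ n * (|a - b| / 2) ^ z₁
              + CF * ((2:ℝ) ^ (1 - z₁)) ^ n * (|a - b| / 2) ^ z₁ := add_le_add ia ib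
          _ = CF * ((2:ℝ) ^ (1 - z₁)) ^ (n + 1) * |a - b| ^ z₁ := by
              rw [hhalf, pow_succ, ← two_mul_rpow z₁]; ring
  have hlim : Filter.Tendsto
      (fun n : ℕ => CF * ((2:ℝ) ^ (1 - z₁)) ^ n * |x - y| ^ z₁)
      Filter.atTop (nhds 0) := by
    have h1 : Filter.Tendsto (fun n : ℕ => ((2:ℝ) ^ (1 - z₁)) ^ n)
        Filter.atTop (nhds 0) :=
      tendsto_pow_atTop_nhds_zero_of_lt_one (q_pos z₁).le (q_lt_one hz)
    have := (h1.const_mul CF).mul_const (|x - y| ^ z₁)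
    simpa using this
  have : ‖II f x y + II f y x‖ ≤ 0 :=
    ge_of_tendsto hlim (Filter.Eventually.of_forall fun n => key n x y hx hy)
  simpa using norm_le_zero_iff.1 this

lemma II_between
    (HIIc : ContinuousOn (fun p : ℝ × ℝ => II f p.1 p.2) (Icc 0 T ×ˢ Icc 0 T))
    {u : ℝ} (hu : u ∈ uIcc t s) :
    II f t s = II f t u + II f u s := by
  have h0T : (0:ℝ) ∈ Icc 0 T := ⟨le_refl 0, hT.le⟩
  have huI : u ∈ Icc 0 T := by
    rcases Set.mem_uIcc.1 hu with ⟨h1, h2⟩ | ⟨h1, h2⟩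
    · exact ⟨le_trans ht.1 h1, le_trans h2 hs.2⟩
    · exact ⟨le_trans hs.1 h1, le_trans h2 ht.2⟩
  by_cases hts : t = s
  · subst hts
    have hut : u = t := by
      rcases Set.mem_uIcc.1 hu with ⟨h1, h2⟩ | ⟨h1, h2⟩ <;> linarith
    subst hut
    rw [II_self H0 h0T ht]
    simp
  -- t ≠ s
  have hst : s - t ≠ 0 := fun hc => hts (by linarith [sub_eq_zero.1 hc])
  set θ : ℝ := (u - t) / (s - t) with hθ
  have hθ01 : 0 ≤ θ ∧ θ ≤ 1 := by
    rcases Set.mem_uIcc.1 hu with ⟨h1, h2⟩ | ⟨h1, h2⟩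
    · have hlt : t < s := lt_of_le_of_ne (le_trans h1 h2) hts
      constructor
      · apply div_nonneg (by linarith) (by linarith)
      · rw [div_le_one (by linarith)]; linarith
    · have hlt : s < t := lt_of_le_of_ne (le_trans h1 h2) (fun hc => hts hc.symm)
      have : θ = (t - u) / (t - s) := by
        rw [hθ, ← neg_div_neg_eq]; ring_nf
      rw [this]
      constructor
      · apply div_nonneg (by linarith) (by linarith)
      · rw [div_le_one (by linarith)]; linarith
  have him : ∀ m : ℕ, ⌊θ * 2 ^ m⌋₊ ≤ 2 ^ m := by
    intro m
    have h1 : θ * 2 ^ m ≤ 2 ^ m := by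
      nlinarith [hθ01.2, pow_pos (show (0:ℝ) < 2 by norm_num) m]
    calc ⌊θ * 2 ^ m⌋₊ ≤ ⌊((2:ℝ) ^ m)⌋₊ := Nat.floor_le_floor h1
      _ = 2 ^ m := by
          rw [show ((2:ℝ) ^ m) = ((2 ^ m : ℕ) : ℝ) by push_cast; ring, Nat.floor_natCast]
  have hids : ∀ m : ℕ, II f t s
      = II f t (dyp t s m (⌊θ * 2 ^ m⌋₊)) + II f (dyp t s m (⌊θ * 2 ^ m⌋₊)) s := by
    intro m
    set i : ℕ := ⌊θ * 2 ^ m⌋₊ with hi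
    have hA := stepA hT hz hS HB HC H0 ht hs m 0 (2 ^ m) (by omega)
    have hB := stepA hT hz hS HB HC H0 ht hs m 0 i (by have := him m; omega)
    have hC := stepA hT hz hS HB HC H0 ht hs m i (2 ^ m - i) (by have := him m; omega)
    simp only [Nat.zero_add] at hA hB hC
    rw [dyp_zero] at hA hB
    rw [show i + (2 ^ m - i) = 2 ^ m by have := him m; omega] at hC
    rw [dyp_last] at hA hC
    have hsum := Finset.sum_range_add
      (fun k => II f (dyp t s m k) (dyp t s m (k + 1))) i (2 ^ m - i)
    rw [show i + (2 ^ m - i) = 2 ^ m by have := him m; omega] at hsum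
    rw [hA, hB, hC, hsum]
  have hu_eq : u = t + θ * (s - t) := by
    rw [hθ]; field_simp; ring
  have htend : Filter.Tendsto (fun m : ℕ => dyp t s m (⌊θ * 2 ^ m⌋₊))
      Filter.atTop (nhds u) := by
    rw [tendsto_iff_dist_tendsto_zero]
    have hbnd : ∀ m : ℕ, dist (dyp t s m (⌊θ * 2 ^ m⌋₊)) u ≤ |s - t| * (1 / 2) ^ m := by
      intro m
      have h2m : (0:ℝ) < 2 ^ m := by positivity
      have hfl1 : (⌊θ * 2 ^ m⌋₊ : ℝ) ≤ θ * 2 ^ m :=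
        Nat.floor_le (mul_nonneg hθ01.1 (by positivity))
      have hfl2 : θ * 2 ^ m - 1 < (⌊θ * 2 ^ m⌋₊ : ℝ) := by
        have := Nat.lt_floor_add_one (θ * 2 ^ m)
        linarith
      have hdist : dist (dyp t s m (⌊θ * 2 ^ m⌋₊)) u
          = |((⌊θ * 2 ^ m⌋₊ : ℝ) / 2 ^ m - θ)| * |s - t| := by
        rw [Real.dist_eq, hu_eq]
        rw [show dyp t s m (⌊θ * 2 ^ m⌋₊) - (t + θ * (s - t))
            = ((⌊θ * 2 ^ m⌋₊ : ℝ) / 2 ^ m - θ) * (s - t) by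
          simp only [dyp]; field_simp; ring, abs_mul]
      have habs : |((⌊θ * 2 ^ m⌋₊ : ℝ) / 2 ^ m - θ)| ≤ (1 / 2) ^ m := by
        have e : ((1:ℝ) / 2) ^ m = 1 / 2 ^ m := by rw [div_pow, one_pow]
        rw [e, abs_le]
        constructor
        · have h3 : (θ * 2 ^ m - 1) / 2 ^ m ≤ (⌊θ * 2 ^ m⌋₊ : ℝ) / 2 ^ m :=
            div_le_div_of_nonneg_right hfl2.le h2m.le
          have h4 : (θ * 2 ^ m - 1) / 2 ^ m = θ - 1 / 2 ^ m := by field_simp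
          rw [h4] at h3
          linarith
        · have h3 : (⌊θ * 2 ^ m⌋₊ : ℝ) / 2 ^ m ≤ θ := by
            rw [div_le_iff₀ h2m]; linarith [hfl1]
          have h5 : (0:ℝ) < 1 / 2 ^ m := by positivity
          linarith
      rw [hdist]
      calc |((⌊θ * 2 ^ m⌋₊ : ℝ) / 2 ^ m - θ)| * |s - t|
          ≤ (1 / 2) ^ m * |s - t| := mul_le_mul_of_nonneg_right habs (abs_nonneg _)
        _ = |s - t| * (1 / 2) ^ m := mul_comm _ _
    have hg : Filter.Tendsto (fun m : ℕ => |s - t| * (1 / 2) ^ m)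
        Filter.atTop (nhds 0) := by
      have := (tendsto_pow_atTop_nhds_zero_of_lt_one
        (by norm_num : (0:ℝ) ≤ 1 / 2) (by norm_num : (1:ℝ) / 2 < 1)).const_mul (|s - t|)
      simpa using this
    exact squeeze_zero (fun m => dist_nonneg) hbnd hg
  have hcontG : ContinuousOn (fun x : ℝ => II f t x + II f x s) (Icc 0 T) := by
    apply ContinuousOn.add
    · have hc : Continuous fun x : ℝ => ((t, x) : ℝ × ℝ) :=
        Continuous.prodMk continuous_const continuous_id
      have := HIIc.comp hc.continuousOn
        (fun x (hx : x ∈ Icc 0 T) => Set.mk_mem_prod ht hx)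
      simpa [Function.comp_def] using this
    · have hc : Continuous fun x : ℝ => ((x, s) : ℝ × ℝ) :=
        Continuous.prodMk continuous_id continuous_const
      have := HIIc.comp hc.continuousOn
        (fun x (hx : x ∈ Icc 0 T) => Set.mk_mem_prod hx hs)
      simpa [Function.comp_def] using this
  have htendin : Filter.Tendsto (fun m : ℕ => dyp t s m (⌊θ * 2 ^ m⌋₊))
      Filter.atTop (nhdsWithin u (Icc 0 T)) := by
    rw [tendsto_nhdsWithin_iff]
    exact ⟨htend, Filter.Eventually.of_forall fun m => dyp_mem_Icc ht hs (him m)⟩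
  have hseq : Filter.Tendsto
      (fun m : ℕ => II f t (dyp t s m (⌊θ * 2 ^ m⌋₊))
        + II f (dyp t s m (⌊θ * 2 ^ m⌋₊)) s)
      Filter.atTop (nhds (II f t u + II f u s)) :=
    ((hcontG u huI).tendsto).comp htendin
  have hconst : Filter.Tendsto (fun _ : ℕ => II f t s)
      Filter.atTop (nhds (II f t u + II f u s)) := by
    have e : (fun _ : ℕ => II f t s)
        = fun m : ℕ => II f t (dyp t s m (⌊θ * 2 ^ m⌋₊))
            + II f (dyp t s m (⌊θ * 2 ^ m⌋₊)) s := funext fun m => hids m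
    rw [e]
    exact hseq
  exact tendsto_nhds_unique tendsto_const_nhds hconst

lemma II_add
    (HIIc : ContinuousOn (fun p : ℝ × ℝ => II f p.1 p.2) (Icc 0 T ×ˢ Icc 0 T))
    {u : ℝ} (hu : u ∈ Icc 0 T) :
    II f t s = II f t u + II f u s := by
  by_cases hmid : u ∈ uIcc t s
  · exact II_between hT hz hS HB HC H0 ht hs HIIc hmid
  by_cases hleft : t ∈ uIcc u s
  · have h1 : II f u s = II f u t + II f t s :=
      II_between hT hz hS HB HC H0 hu hs HIIc hleft
    have h2 : II f t u + II f u t = 0 := II_antisym hT hz hS HB HC H0 ht hs ht hu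
    rw [h1, ← add_assoc]
    rw [h2, zero_add]
  · have hright : s ∈ uIcc t u := by
      simp only [Set.mem_uIcc] at hmid hleft ⊢
      rcases le_total t u with h | h <;> rcases le_total u s with h' | h' <;>
        rcases le_total t s with h'' | h'' <;>
        first
          | (left; constructor <;> linarith)
          | (right; constructor <;> linarith)
          | (exfalso; apply hmid; left; constructor <;> linarith)
          | (exfalso; apply hmid; right; constructor <;> linarith)
          | (exfalso; apply hleft; left; constructor <;> linarith)
          | (exfalso; apply hleft; right; constructor <;> linarith)
    have h1 : II f t u = II f t s + II f s u :=
      II_between hT hz hS HB HC H0 ht hu HIIc hright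
    have h2 : II f s u + II f u s = 0 := II_antisym hT hz hS HB HC H0 ht hs hs hu
    rw [h1, add_assoc, h2, add_zero]

lemma slice_delta
    (HIIc : ContinuousOn (fun p : ℝ × ℝ => II f p.1 p.2) (Icc 0 T ×ˢ Icc 0 T))
    {u : ℝ} (hu : u ∈ Icc 0 T) :
    f t u s = rr f t s - rr f t u - rr f u s := by
  have h0T : (0:ℝ) ∈ Icc 0 T := ⟨le_refl 0, hT.le⟩
  have hg := cocycle_g HC h0T ht hu hs
  have hadd := II_add hT hz hS HB HC H0 ht hs HIIc hu
  simp only [II] at hadd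
  have e : f t u s - (rr f t s - rr f t u - rr f u s)
      = (-f 0 t s - rr f t s) - ((-f 0 t u - rr f t u) + (-f 0 u s - rr f u s))
        + (f t u s - (-f 0 t s - (-f 0 t u) - (-f 0 u s))) := by abel
  apply eq_of_sub_eq_zero
  rw [e, sub_eq_zero.2 hadd, sub_eq_zero.2 hg]
  simp

end Hyps

lemma decomp_HB {T z₁ : ℝ} (hz : 1 < z₁) {g : ℝ → ℝ → ℝ → V} {N : ℕ}
    (hd : Fin N → ℝ → ℝ → ℝ → V) (C ρ : Fin N → ℝ)
    (hC : ∀ k, 0 ≤ C k) (hρ : ∀ k, ρ k ∈ Set.Ioo (0:ℝ) z₁)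
    (heq : ∀ x y z : ℝ, x ∈ Icc 0 T → y ∈ Icc 0 T → z ∈ Icc 0 T →
      g x y z = ∑ k, hd k x y z)
    (hbd : ∀ k, ∀ x y z : ℝ, x ∈ Icc 0 T → y ∈ Icc 0 T → z ∈ Icc 0 T →
      ‖hd k x y z‖ ≤ C k * |x - y| ^ (ρ k) * |y - z| ^ (z₁ - ρ k)) :
    ∀ x y z D : ℝ, x ∈ Icc 0 T → y ∈ Icc 0 T → z ∈ Icc 0 T → 0 ≤ D →
      |x - y| ≤ D → |y - z| ≤ D → ‖g x y z‖ ≤ (∑ k, C k) * D ^ z₁ := by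
  intro x y z D hx hy hz' hD h1 h2
  rw [heq x y z hx hy hz']
  calc ‖∑ k, hd k x y z‖ ≤ ∑ k, C k * D ^ z₁ := by
        refine (norm_sum_le _ _).trans (Finset.sum_le_sum fun k _ => ?_)
        refine (hbd k x y z hx hy hz').trans ?_
        rcases eq_or_lt_of_le hD with hD0 | hD0
        · have hxy : |x - y| = 0 := le_antisymm (by rw [← hD0] at h1; exact h1) (abs_nonneg _)
          rw [hxy, Real.zero_rpow (ne_of_gt (hρ k).1), ← hD0,
            Real.zero_rpow (by positivity : z₁ ≠ 0)]
          simp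
        · have e : D ^ (ρ k) * D ^ (z₁ - ρ k) = D ^ z₁ := by
            rw [← Real.rpow_add hD0]; ring_nf
          calc C k * |x - y| ^ (ρ k) * |y - z| ^ (z₁ - ρ k)
              ≤ C k * D ^ (ρ k) * D ^ (z₁ - ρ k) := by
                have r1 : |x - y| ^ (ρ k) ≤ D ^ (ρ k) :=
                  Real.rpow_le_rpow (abs_nonneg _) h1 (hρ k).1.le
                have r2 : |y - z| ^ (z₁ - ρ k) ≤ D ^ (z₁ - ρ k) :=
                  Real.rpow_le_rpow (abs_nonneg _) h2 (by have := (hρ k).2; linarith)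
                have h3 : (0:ℝ) ≤ |x - y| ^ (ρ k) := Real.rpow_nonneg (abs_nonneg _) _
                have h4 : (0:ℝ) ≤ D ^ (ρ k) := Real.rpow_nonneg hD _
                have h5 : (0:ℝ) ≤ |y - z| ^ (z₁ - ρ k) := Real.rpow_nonneg (abs_nonneg _) _
                exact mul_le_mul (mul_le_mul_of_nonneg_left r1 (hC k)) r2 h5
                  (mul_nonneg (hC k) h4)
            _ = C k * D ^ z₁ := by rw [mul_assoc, e]
    _ = (∑ k, C k) * D ^ z₁ := by rw [Finset.sum_mul]

lemma unique_aux {T : ℝ} (hT : 0 < T) {g : ℝ → ℝ → V}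
    (hadd : ∀ t u s : ℝ, t ∈ Icc 0 T → u ∈ Icc 0 T → s ∈ Icc 0 T →
      g t s = g t u + g u s)
    {ν1 ν2 K1 K2 : ℝ} (hν1 : 1 < ν1) (hν2 : 1 < ν2)
    (hb : ∀ t s : ℝ, t ∈ Icc 0 T → s ∈ Icc 0 T →
      ‖g t s‖ ≤ K1 * |t - s| ^ ν1 + K2 * |t - s| ^ ν2)
    {t s : ℝ} (ht : t ∈ Icc 0 T) (hs : s ∈ Icc 0 T) : g t s = 0 := by
  have key : ∀ n : ℕ, ∀ a b : ℝ, a ∈ Icc 0 T → b ∈ Icc 0 T →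
      ‖g a b‖ ≤ ((2:ℝ) ^ (1 - ν1)) ^ n * (K1 * |a - b| ^ ν1)
        + ((2:ℝ) ^ (1 - ν2)) ^ n * (K2 * |a - b| ^ ν2) := by
    intro n
    induction n with
    | zero => intro a b ha hb'; simpa using hb a b ha hb'
    | succ n ih =>
        intro a b ha hb'
        have e2 : dyp a b 1 1 = (a + b) / 2 := by simp [dyp]; ring
        have hm : (a + b) / 2 ∈ Icc 0 T := by
          rw [← e2]; exact dyp_mem_Icc ha hb' (by norm_num)
        have hsplit := hadd a ((a + b) / 2) b ha hm hb'
        have ia := ih a ((a + b) / 2) ha hm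
        have ib := ih ((a + b) / 2) b hm hb'
        have gm1 : |a - (a + b) / 2| = |a - b| / 2 := by
          rw [show a - (a + b) / 2 = (a - b) / 2 by ring, abs_div]; norm_num
        have gm2 : |(a + b) / 2 - b| = |a - b| / 2 := by
          rw [show (a + b) / 2 - b = (a - b) / 2 by ring, abs_div]; norm_num
        rw [gm1] at ia; rw [gm2] at ib
        have hh1 : (|a - b| / 2) ^ ν1 = |a - b| ^ ν1 * 2 ^ (-ν1) := by
          simpa using pow_div_rpow ν1 (|a - b|) (abs_nonneg _) 1
        have hh2 : (|a - b| / 2) ^ ν2 = |a - b| ^ ν2 * 2 ^ (-ν2) := by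
          simpa using pow_div_rpow ν2 (|a - b|) (abs_nonneg _) 1
        calc ‖g a b‖ = ‖g a ((a + b) / 2) + g ((a + b) / 2) b‖ := by rw [← hsplit]
          _ ≤ ‖g a ((a + b) / 2)‖ + ‖g ((a + b) / 2) b‖ := norm_add_le _ _
          _ ≤ (((2:ℝ) ^ (1 - ν1)) ^ n * (K1 * (|a - b| / 2) ^ ν1)
                + ((2:ℝ) ^ (1 - ν2)) ^ n * (K2 * (|a - b| / 2) ^ ν2))
              + (((2:ℝ) ^ (1 - ν1)) ^ n * (K1 * (|a - b| / 2) ^ ν1)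
                + ((2:ℝ) ^ (1 - ν2)) ^ n * (K2 * (|a - b| / 2) ^ ν2)) := add_le_add ia ib
          _ = ((2:ℝ) ^ (1 - ν1)) ^ (n + 1) * (K1 * |a - b| ^ ν1)
              + ((2:ℝ) ^ (1 - ν2)) ^ (n + 1) * (K2 * |a - b| ^ ν2) := by
              rw [hh1, hh2, pow_succ, pow_succ, ← two_mul_rpow ν1, ← two_mul_rpow ν2]
              ring
  have hlim : Filter.Tendsto
      (fun n : ℕ => ((2:ℝ) ^ (1 - ν1)) ^ n * (K1 * |t - s| ^ ν1)
        + ((2:ℝ) ^ (1 - ν2)) ^ n * (K2 * |t - s| ^ ν2)) Filter.atTop (nhds 0) := by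
    have h1 := (tendsto_pow_atTop_nhds_zero_of_lt_one (q_pos ν1).le
      (q_lt_one hν1)).mul_const (K1 * |t - s| ^ ν1)
    have h2 := (tendsto_pow_atTop_nhds_zero_of_lt_one (q_pos ν2).le
      (q_lt_one hν2)).mul_const (K2 * |t - s| ^ ν2)
    simpa using h1.add h2
  have : ‖g t s‖ ≤ 0 :=
    ge_of_tendsto hlim (Filter.Eventually.of_forall fun n => key n t s ht hs)
  simpa using norm_le_zero_iff.1 this

end Sew

/-- The cube `[0,T]^l`. -/
def cube (T : ℝ) (l : ℕ) : Set (Fin l → ℝ) := {t | ∀ j, t j ∈ Set.Icc 0 T}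

/-- **The partial sewing map `Λ₁` on `𝒞𝒞_{3,l}(V)`.**
Let `z₁ > 1` and let `h ∈ 𝒞𝒞_{3,l}(V)` satisfy `δ₁h = 0` and
`sup_τ ‖h(·,τ)‖_{z₁} < ∞` (witnessed by a uniform bound `M` over decompositions of the
slices).  Then there is a unique `Λ₁h ∈ 𝒞𝒞_{2,l}(V)` with `δ₁(Λ₁h) = h` whose slices
have finite `ν`-norm for some `ν > 1`; moreover
`‖(Λ₁h)(·,τ)‖_{z₁} ≤ (2^{z₁}−2)⁻¹ ‖h(·,τ)‖_{z₁}` for every `τ` (the bound holding for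
every decomposition of the slice `h(·,τ)`). -/
theorem stmt16
    {V : Type*} [NormedAddCommGroup V] [NormedSpace ℝ V] [CompleteSpace V]
    (T : ℝ) (hT : 0 < T) (z₁ : ℝ) (hz₁ : 1 < z₁) (l : ℕ) (hl : 1 ≤ l)
    (h : ℝ → ℝ → ℝ → (Fin l → ℝ) → V)
    -- h ∈ 𝒞𝒞_{3,l}(V)
    (hhc : ContinuousOn
      (fun q : (ℝ × ℝ × ℝ) × (Fin l → ℝ) => h q.1.1 q.1.2.1 q.1.2.2 q.2)
      ((Icc 0 T ×ˢ Icc 0 T ×ˢ Icc 0 T) ×ˢ cube T l))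
    (hh0 : ∀ t u s : ℝ, t ∈ Icc 0 T → u ∈ Icc 0 T → s ∈ Icc 0 T →
      ∀ τ ∈ cube T l,
      ((t = u ∨ u = s) ∨ ∃ i j : Fin l, (j : ℕ) = (i : ℕ) + 1 ∧ τ i = τ j) →
      h t u s τ = 0)
    -- δ₁h = 0
    (hcocycle : ∀ a b c d : ℝ, a ∈ Icc 0 T → b ∈ Icc 0 T → c ∈ Icc 0 T →
      d ∈ Icc 0 T → ∀ τ ∈ cube T l,
      h b c d τ - h a c d τ + h a b d τ - h a b c τ = 0)
    -- M = sup_τ ‖h(·,τ)‖_{z₁} < ∞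
    (hM : ∃ M : ℝ, ∀ τ ∈ cube T l,
      ∃ (N : ℕ) (hd : Fin N → ℝ → ℝ → ℝ → V) (C ρ : Fin N → ℝ),
        (∀ k, 0 ≤ C k) ∧ (∀ k, ρ k ∈ Set.Ioo (0:ℝ) z₁) ∧ (∑ k, C k) ≤ M ∧
        (∀ t u s : ℝ, t ∈ Icc 0 T → u ∈ Icc 0 T → s ∈ Icc 0 T →
          h t u s τ = ∑ k, hd k t u s) ∧
        (∀ k, ∀ t u s : ℝ, t ∈ Icc 0 T → u ∈ Icc 0 T → s ∈ Icc 0 T →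
          ‖hd k t u s‖ ≤ C k * |t - u| ^ (ρ k) * |u - s| ^ (z₁ - ρ k))) :
    ∃ r : ℝ → ℝ → (Fin l → ℝ) → V,
      -- r ∈ 𝒞𝒞_{2,l}(V)
      (ContinuousOn (fun q : (ℝ × ℝ) × (Fin l → ℝ) => r q.1.1 q.1.2 q.2)
        ((Icc 0 T ×ˢ Icc 0 T) ×ˢ cube T l) ∧
        ∀ t s : ℝ, t ∈ Icc 0 T → s ∈ Icc 0 T → ∀ τ ∈ cube T l,
          (t = s ∨ ∃ i j : Fin l, (j : ℕ) = (i : ℕ) + 1 ∧ τ i = τ j) →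
          r t s τ = 0) ∧
      -- δ₁r = h
      (∀ t u s : ℝ, t ∈ Icc 0 T → u ∈ Icc 0 T → s ∈ Icc 0 T → ∀ τ ∈ cube T l,
        h t u s τ = r t s τ - r t u τ - r u s τ) ∧
      -- slices have finite ν-norm, ν > 1
      (∀ τ ∈ cube T l, ∃ ν > (1:ℝ), ∃ K : ℝ, ∀ t s : ℝ, t ∈ Icc 0 T → s ∈ Icc 0 T →
        ‖r t s τ‖ ≤ K * |t - s| ^ ν) ∧
      -- quantitative bound, for every decomposition of each slice
      (∀ τ ∈ cube T l,
        ∀ (N : ℕ) (hd : Fin N → ℝ → ℝ → ℝ → V) (C ρ : Fin N → ℝ),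
        (∀ k, 0 ≤ C k) → (∀ k, ρ k ∈ Set.Ioo (0:ℝ) z₁) →
        (∀ t u s : ℝ, t ∈ Icc 0 T → u ∈ Icc 0 T → s ∈ Icc 0 T →
          h t u s τ = ∑ k, hd k t u s) →
        (∀ k, ∀ t u s : ℝ, t ∈ Icc 0 T → u ∈ Icc 0 T → s ∈ Icc 0 T →
          ‖hd k t u s‖ ≤ C k * |t - u| ^ (ρ k) * |u - s| ^ (z₁ - ρ k)) →
        ∀ t s : ℝ, t ∈ Icc 0 T → s ∈ Icc 0 T →
          ‖r t s τ‖ ≤ ((2:ℝ) ^ z₁ - 2)⁻¹ * (∑ k, C k) * |t - s| ^ z₁) ∧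
      -- uniqueness
      (∀ r' : ℝ → ℝ → (Fin l → ℝ) → V,
        (ContinuousOn (fun q : (ℝ × ℝ) × (Fin l → ℝ) => r' q.1.1 q.1.2 q.2)
          ((Icc 0 T ×ˢ Icc 0 T) ×ˢ cube T l) ∧
          ∀ t s : ℝ, t ∈ Icc 0 T → s ∈ Icc 0 T → ∀ τ ∈ cube T l,
            (t = s ∨ ∃ i j : Fin l, (j : ℕ) = (i : ℕ) + 1 ∧ τ i = τ j) →
            r' t s τ = 0) →
        (∀ t u s : ℝ, t ∈ Icc 0 T → u ∈ Icc 0 T → s ∈ Icc 0 T → ∀ τ ∈ cube T l,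
          h t u s τ = r' t s τ - r' t u τ - r' u s τ) →
        (∀ τ ∈ cube T l, ∃ ν > (1:ℝ), ∃ K : ℝ,
          ∀ t s : ℝ, t ∈ Icc 0 T → s ∈ Icc 0 T → ‖r' t s τ‖ ≤ K * |t - s| ^ ν) →
        ∀ t s : ℝ, t ∈ Icc 0 T → s ∈ Icc 0 T → ∀ τ ∈ cube T l,
          r' t s τ = r t s τ) := by
  classical
  obtain ⟨M, hM⟩ := hM
  have h0T : (0:ℝ) ∈ Icc 0 T := ⟨le_refl 0, hT.le⟩
  -- derived slice hypotheses
  have hHB : ∀ τ ∈ cube T l, ∃ S : ℝ, 0 ≤ S ∧ S ≤ M ∧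
      (∀ x y z D : ℝ, x ∈ Icc 0 T → y ∈ Icc 0 T → z ∈ Icc 0 T → 0 ≤ D →
        |x - y| ≤ D → |y - z| ≤ D →
        ‖h x y z τ‖ ≤ S * D ^ z₁) := by
    intro τ hτ
    obtain ⟨N, hd, C, ρ, hC, hρ, hCM, heq, hbd⟩ := hM τ hτ
    exact ⟨∑ k, C k, Finset.sum_nonneg fun k _ => hC k, hCM,
      decomp_HB (g := fun x y z => h x y z τ) hz₁ hd C ρ hC hρ heq hbd⟩
  have hH0 : ∀ τ ∈ cube T l, ∀ x y z : ℝ, x ∈ Icc 0 T → y ∈ Icc 0 T → z ∈ Icc 0 T →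
      (x = y ∨ y = z) → h x y z τ = 0 :=
    fun τ hτ x y z hx hy hz ho => hh0 x y z hx hy hz τ hτ (Or.inl ho)
  have hHC : ∀ τ ∈ cube T l, ∀ a b c d : ℝ, a ∈ Icc 0 T → b ∈ Icc 0 T →
      c ∈ Icc 0 T → d ∈ Icc 0 T →
      h b c d τ - h a c d τ + h a b d τ - h a b c τ = 0 :=
    fun τ hτ a b c d ha hb hc hd => hcocycle a b c d ha hb hc hd τ hτ
  have hMnn : 0 ≤ M := by
    obtain ⟨S, hS0, hSM, _⟩ := hHB (fun _ => 0) (fun j => ⟨le_refl 0, hT.le⟩)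
    linarith
  have hTabs : ∀ t s : ℝ, t ∈ Icc 0 T → s ∈ Icc 0 T → |t - s| ≤ T := by
    intro t s ht hs
    rw [abs_le]
    constructor <;> [linarith [ht.1, hs.2]; linarith [ht.2, hs.1]]
  -- the candidate
  set r : ℝ → ℝ → (Fin l → ℝ) → V :=
    fun t s τ => rr (fun x y z => h x y z τ) t s with hrdef
  -- joint continuity
  set Dom : Set ((ℝ × ℝ) × (Fin l → ℝ)) := (Icc 0 T ×ˢ Icc 0 T) ×ˢ cube T l with hDom
  have hrcont : ContinuousOn (fun q : (ℝ × ℝ) × (Fin l → ℝ) => r q.1.1 q.1.2 q.2) Dom := by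
    set F : ℕ → ((ℝ × ℝ) × (Fin l → ℝ)) → V := fun N q =>
      ∑ n ∈ Finset.range N, row (fun x y z => h x y z q.2) q.1.1 q.1.2 n with hF
    have hFc : ∀ N : ℕ, ContinuousOn (F N) Dom := by
      intro N
      apply continuousOn_finset_sum
      intro n _
      apply continuousOn_finset_sum
      intro i hi
      simp only [Finset.mem_range] at hi
      have hcm : Continuous (fun q : (ℝ × ℝ) × (Fin l → ℝ) =>
          (((dyp q.1.1 q.1.2 n i, dyp q.1.1 q.1.2 (n + 1) (2 * i + 1),
            dyp q.1.1 q.1.2 n (i + 1)) : ℝ × ℝ × ℝ), q.2)) := by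
        unfold dyp; fun_prop
      have hmaps : Set.MapsTo (fun q : (ℝ × ℝ) × (Fin l → ℝ) =>
          (((dyp q.1.1 q.1.2 n i, dyp q.1.1 q.1.2 (n + 1) (2 * i + 1),
            dyp q.1.1 q.1.2 n (i + 1)) : ℝ × ℝ × ℝ), q.2)) Dom
          ((Icc 0 T ×ˢ Icc 0 T ×ˢ Icc 0 T) ×ˢ cube T l) := by
        rintro ⟨⟨t, s⟩, τ⟩ ⟨⟨ht, hs⟩, hτ⟩
        have hi2 : 2 * i + 1 ≤ 2 ^ (n + 1) := by rw [pow_succ]; omega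
        exact Set.mk_mem_prod
          (Set.mk_mem_prod (dyp_mem_Icc ht hs hi.le)
            (Set.mk_mem_prod (dyp_mem_Icc ht hs hi2) (dyp_mem_Icc ht hs hi)))
          hτ
      have := hhc.comp hcm.continuousOn hmaps
      simpa [Function.comp_def] using this
    set B : ℝ := M * T ^ z₁ * 2 ^ (-z₁) with hB
    have hrowM : ∀ q ∈ Dom, ∀ n : ℕ,
        ‖row (fun x y z => h x y z q.2) q.1.1 q.1.2 n‖
          ≤ B * ((2:ℝ) ^ (1 - z₁)) ^ n := by
      rintro ⟨⟨t, s⟩, τ⟩ ⟨⟨ht, hs⟩, hτ⟩ n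
      obtain ⟨S, hS0, hSM, HBs⟩ := hHB τ hτ
      refine (row_norm_le hS0 HBs ht hs n).trans ?_
      rw [hB]
      have h1 : |t - s| ^ z₁ ≤ T ^ z₁ :=
        Real.rpow_le_rpow (abs_nonneg _) (hTabs t s ht hs) (by linarith)
      have h2 : S * |t - s| ^ z₁ ≤ M * T ^ z₁ :=
        mul_le_mul hSM h1 (Real.rpow_nonneg (abs_nonneg _) _) hMnn
      exact mul_le_mul_of_nonneg_right
        (mul_le_mul_of_nonneg_right h2 (by positivity)) (by positivity)
    have hBnn : 0 ≤ B := by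
      rw [hB]
      have : (0:ℝ) ≤ T ^ z₁ := Real.rpow_nonneg hT.le _
      positivity
    have huc : TendstoUniformlyOn F
        (fun q : (ℝ × ℝ) × (Fin l → ℝ) => r q.1.1 q.1.2 q.2) Filter.atTop Dom := by
      rw [Metric.tendstoUniformlyOn_iff]
      intro ε hε
      have htail : Filter.Tendsto
          (fun N : ℕ => B * (1 - (2:ℝ) ^ (1 - z₁))⁻¹ * ((2:ℝ) ^ (1 - z₁)) ^ N)
          Filter.atTop (nhds 0) := by
        simpa using (tendsto_pow_atTop_nhds_zero_of_lt_one (q_pos z₁).le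
          (q_lt_one hz₁)).const_mul (B * (1 - (2:ℝ) ^ (1 - z₁))⁻¹)
      filter_upwards [htail.eventually_lt_const hε] with N hN
      rintro ⟨⟨t, s⟩, τ⟩ hq
      obtain ⟨⟨ht, hs⟩, hτ⟩ := hq
      obtain ⟨S, hS0, hSM, HBs⟩ := hHB τ hτ
      have hsum : Summable (row (fun x y z => h x y z τ) t s) :=
        row_summable hz₁ hS0 HBs ht hs
      have hsplit := Summable.sum_add_tsum_nat_add (f := row (fun x y z => h x y z τ) t s) N hsum
      rw [dist_eq_norm]
      have keyeq : r t s τ - F N ((t, s), τ)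
          = ∑' n, row (fun x y z => h x y z τ) t s (n + N) := by
        rw [hrdef]
        simp only [rr, hF]
        rw [← hsplit]
        abel
      rw [keyeq]
      have hgeo : HasSum (fun n : ℕ => (B * ((2:ℝ) ^ (1 - z₁)) ^ N) * ((2:ℝ) ^ (1 - z₁)) ^ n)
          ((B * ((2:ℝ) ^ (1 - z₁)) ^ N) * (1 - (2:ℝ) ^ (1 - z₁))⁻¹) := by
        have := (summable_geometric_of_lt_one (q_pos z₁).le (q_lt_one hz₁)).hasSum
        rw [tsum_geometric_of_lt_one (q_pos z₁).le (q_lt_one hz₁)] at this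
        exact this.mul_left _
      have hbound : ∀ n : ℕ, ‖row (fun x y z => h x y z τ) t s (n + N)‖
          ≤ (B * ((2:ℝ) ^ (1 - z₁)) ^ N) * ((2:ℝ) ^ (1 - z₁)) ^ n := by
        intro n
        refine (hrowM ((t, s), τ) ⟨⟨ht, hs⟩, hτ⟩ (n + N)).trans (le_of_eq ?_)
        rw [pow_add]
        ring
      have := tsum_of_norm_bounded hgeo hbound
      calc ‖∑' n, row (fun x y z => h x y z τ) t s (n + N)‖
          ≤ (B * ((2:ℝ) ^ (1 - z₁)) ^ N) * (1 - (2:ℝ) ^ (1 - z₁))⁻¹ := this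
        _ = B * (1 - (2:ℝ) ^ (1 - z₁))⁻¹ * ((2:ℝ) ^ (1 - z₁)) ^ N := by ring
        _ < ε := hN
    exact huc.continuousOn (Filter.Frequently.of_forall hFc)
  -- continuity of the slice `II`
  have hIIc : ∀ τ ∈ cube T l, ContinuousOn
      (fun p : ℝ × ℝ => II (fun x y z => h x y z τ) p.1 p.2)
      (Icc 0 T ×ˢ Icc 0 T) := by
    intro τ hτ
    simp only [II]
    apply ContinuousOn.sub
    · apply ContinuousOn.neg
      have hcm : Continuous (fun p : ℝ × ℝ => ((((0:ℝ), p.1, p.2) : ℝ × ℝ × ℝ), τ)) := by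
        fun_prop
      have hmaps : Set.MapsTo (fun p : ℝ × ℝ => ((((0:ℝ), p.1, p.2) : ℝ × ℝ × ℝ), τ))
          (Icc 0 T ×ˢ Icc 0 T) ((Icc 0 T ×ˢ Icc 0 T ×ˢ Icc 0 T) ×ˢ cube T l) :=
        fun p hp => Set.mk_mem_prod (Set.mk_mem_prod h0T (Set.mk_mem_prod hp.1 hp.2)) hτ
      have := hhc.comp hcm.continuousOn hmaps
      simpa [Function.comp_def] using this
    · have hcm : Continuous (fun p : ℝ × ℝ => (((p.1, p.2) : ℝ × ℝ), τ)) := by fun_prop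
      have := hrcont.comp hcm.continuousOn
        (fun p (hp : p ∈ Icc 0 T ×ˢ Icc 0 T) =>
          Set.mk_mem_prod (Set.mk_mem_prod hp.1 hp.2) hτ)
      simpa [Function.comp_def, hrdef] using this
  -- the coboundary identity
  have hdelta : ∀ t u s : ℝ, t ∈ Icc 0 T → u ∈ Icc 0 T → s ∈ Icc 0 T → ∀ τ ∈ cube T l,
      h t u s τ = r t s τ - r t u τ - r u s τ := by
    intro t u s ht hu hs τ hτ
    obtain ⟨S, hS0, hSM, HBs⟩ := hHB τ hτ
    have := slice_delta (f := fun x y z => h x y z τ) hT hz₁ hS0 HBs (hHC τ hτ)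
      (hH0 τ hτ) ht hs (hIIc τ hτ) hu
    simpa [hrdef] using this
  -- Hölder bound with nonnegative constant
  have hhol : ∀ τ ∈ cube T l, ∃ K : ℝ, 0 ≤ K ∧ ∀ t s : ℝ, t ∈ Icc 0 T → s ∈ Icc 0 T →
      ‖r t s τ‖ ≤ K * |t - s| ^ z₁ := by
    intro τ hτ
    obtain ⟨S, hS0, hSM, HBs⟩ := hHB τ hτ
    refine ⟨((2:ℝ) ^ z₁ - 2)⁻¹ * S,
      mul_nonneg (inv_nonneg.2 (two_rpow_sub_two_pos hz₁).le) hS0, fun t s ht hs => ?_⟩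
    have := rr_norm_le hz₁ hS0 HBs ht hs
    simpa [hrdef] using this
  refine ⟨r, ⟨hrcont, ?_⟩, hdelta, ?_, ?_, ?_⟩
  · -- vanishing on diagonals
    intro t s ht hs τ hτ hor
    rcases hor with rfl | hcons
    · simp only [hrdef]
      exact rr_self (hh0 t t t ht ht ht τ hτ (Or.inl (Or.inl rfl)))
    · simp only [hrdef]
      have hrow : ∀ n, row (fun x y z => h x y z τ) t s n = 0 := by
        intro n
        refine Finset.sum_eq_zero fun k hk => ?_
        simp only [Finset.mem_range] at hk
        have hk2 : 2 * k + 1 ≤ 2 ^ (n + 1) := by rw [pow_succ]; omega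
        exact hh0 _ _ _ (dyp_mem_Icc ht hs hk.le) (dyp_mem_Icc ht hs hk2)
          (dyp_mem_Icc ht hs hk) τ hτ (Or.inr hcons)
      simp [rr, hrow]
  · -- finite ν-norm
    intro τ hτ
    obtain ⟨K, hK0, hK⟩ := hhol τ hτ
    exact ⟨z₁, hz₁, K, hK⟩
  · -- quantitative bound for every decomposition
    intro τ hτ N hd C ρ hC hρ heq hbd t s ht hs
    have HBd := decomp_HB (g := fun x y z => h x y z τ) hz₁ hd C ρ hC hρ heq hbd
    have := rr_norm_le hz₁ (Finset.sum_nonneg fun k _ => hC k) HBd ht hs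
    simpa [hrdef] using this
  · -- uniqueness
    rintro r' ⟨hr'c, hr'v⟩ hr'd hr'n t s ht hs τ hτ
    obtain ⟨K, hK0, hK⟩ := hhol τ hτ
    obtain ⟨ν, hν, K', hK'⟩ := hr'n τ hτ
    set g : ℝ → ℝ → V := fun a b => r' a b τ - r a b τ with hg
    have hadd : ∀ a u b : ℝ, a ∈ Icc 0 T → u ∈ Icc 0 T → b ∈ Icc 0 T →
        g a b = g a u + g u b := by
      intro a u b ha hu hb
      have h1 := hr'd a u b ha hu hb τ hτ
      have h2 := hdelta a u b ha hu hb τ hτ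
      have e : g a b - (g a u + g u b)
          = (r' a b τ - r' a u τ - r' u b τ) - (r a b τ - r a u τ - r u b τ) := by
        simp only [hg]; abel
      rw [← h1, ← h2, sub_self] at e
      exact eq_of_sub_eq_zero e
    have hbd2 : ∀ a b : ℝ, a ∈ Icc 0 T → b ∈ Icc 0 T →
        ‖g a b‖ ≤ K' * |a - b| ^ ν + K * |a - b| ^ z₁ := by
      intro a b ha hb
      refine (norm_sub_le _ _).trans (add_le_add (hK' a b ha hb) (hK a b ha hb))
    have hzero := unique_aux hT hadd hν hz₁ hbd2 ht hs
    have : r' t s τ - r t s τ = 0 := by simpa [hg] using hzero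
    exact sub_eq_zero.1 this
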